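/- Let (Ω, 𝔽, P) be a probability space, let 0 < w_min, and let W : Ω → ℝ be a random variable with W ≥ w_min almost surely. Let P₀ ∈ (0, 1], let 0 ≤ l₁ ≤ l₂ be reals, let δ > 0, and let N, N* : Ω → ℝ be measurable with 0 ≤ N ≤ P₀, 0 ≤ N* ≤ P₀, and |N − N*| ≤ δ/P₀ almost surely. Define L := l₂ − (N/P₀)·(l₂ − l₁) and L* := l₂ − (N*/P₀)·(l₂ − l₁), and set D₁ := 2·l₂·(l₂ − l₁)·E[1/W]/(P₀³·w_min) and D₂ := 2·(l₂ − l₁)·(2·l₂ − l₁)·E[1/W²]/P₀². Then |Var(L/W) − Var(L*/W)| ≤ (D₁ + D₂)·δ, and consequently |√Var(L/W) − √Var(L*/W)| ≤ √((D₁ + D₂)·δ). -/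

import Mathlib

open MeasureTheory ProbabilityTheory

private lemma sqrt_abs_sub_sqrt_le {a b : ℝ} (ha : 0 ≤ a) (hb : 0 ≤ b) :
    |Real.sqrt a - Real.sqrt b| ≤ Real.sqrt |a - b| := by
  have key : ∀ x y : ℝ, 0 ≤ x → 0 ≤ y → y ≤ x →
      Real.sqrt x - Real.sqrt y ≤ Real.sqrt (x - y) := by
    intro x y hx hy hxy
    have h1 : Real.sqrt x ≤ Real.sqrt y + Real.sqrt (x - y) := by
      have h2 : x ≤ (Real.sqrt y + Real.sqrt (x - y)) ^ 2 := by
        have := Real.sq_sqrt hy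
        have := Real.sq_sqrt (sub_nonneg.mpr hxy)
        have := Real.sqrt_nonneg y
        have := Real.sqrt_nonneg (x - y)
        nlinarith
      calc Real.sqrt x ≤ Real.sqrt ((Real.sqrt y + Real.sqrt (x - y)) ^ 2) :=
            Real.sqrt_le_sqrt h2
        _ = Real.sqrt y + Real.sqrt (x - y) := by
            rw [Real.sqrt_sq (by positivity)]
    linarith
  rcases le_total b a with h | h
  · rw [abs_of_nonneg (sub_nonneg.mpr (Real.sqrt_le_sqrt h)),
      abs_of_nonneg (sub_nonneg.mpr h)]
    exact key a b ha hb h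
  · rw [abs_sub_comm (Real.sqrt a), abs_sub_comm a b,
      abs_of_nonneg (sub_nonneg.mpr (Real.sqrt_le_sqrt h)),
      abs_of_nonneg (sub_nonneg.mpr h)]
    exact key b a hb ha h

set_option maxHeartbeats 1000000 in
/-- Variance bound: the variances of the weight-normalized perceived latencies
under two assignments differing pointwise by at most `δ/P₀` differ by at most
`(D₁ + D₂)·δ`, and their standard deviations by at most `√((D₁ + D₂)·δ)`. -/
theorem perceived_latency_variance_bound {Ω : Type*} [MeasurableSpace Ω]
    (P : Measure Ω) [IsProbabilityMeasure P]
    (wmin : ℝ) (hwmin : 0 < wmin)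
    (W : Ω → ℝ) (hWmeas : Measurable W) (hW : ∀ᵐ ω ∂P, wmin ≤ W ω)
    (P₀ : ℝ) (hP₀ : P₀ ∈ Set.Ioc 0 1)
    (l₁ l₂ : ℝ) (hl₁ : 0 ≤ l₁) (hl : l₁ ≤ l₂)
    (δ : ℝ) (hδ : 0 < δ)
    (N Ns : Ω → ℝ) (hNmeas : Measurable N) (hNsmeas : Measurable Ns)
    (hN : ∀ᵐ ω ∂P, N ω ∈ Set.Icc 0 P₀) (hNs : ∀ᵐ ω ∂P, Ns ω ∈ Set.Icc 0 P₀)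
    (hdiff : ∀ᵐ ω ∂P, |N ω - Ns ω| ≤ δ / P₀)
    (D₁ D₂ : ℝ)
    (hD₁ : D₁ = 2 * l₂ * (l₂ - l₁) * (∫ ω, 1 / W ω ∂P) / (P₀ ^ 3 * wmin))
    (hD₂ : D₂ = 2 * (l₂ - l₁) * (2 * l₂ - l₁) * (∫ ω, (1 / W ω) ^ 2 ∂P) / P₀ ^ 2) :
    |variance (fun ω => (l₂ - (N ω / P₀) * (l₂ - l₁)) / W ω) P
        - variance (fun ω => (l₂ - (Ns ω / P₀) * (l₂ - l₁)) / W ω) P|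
      ≤ (D₁ + D₂) * δ ∧
    |Real.sqrt (variance (fun ω => (l₂ - (N ω / P₀) * (l₂ - l₁)) / W ω) P)
        - Real.sqrt (variance (fun ω => (l₂ - (Ns ω / P₀) * (l₂ - l₁)) / W ω) P)|
      ≤ Real.sqrt ((D₁ + D₂) * δ) := by
  obtain ⟨hP₀0, hP₀1⟩ := hP₀
  set X : Ω → ℝ := fun ω => (l₂ - (N ω / P₀) * (l₂ - l₁)) / W ω with hXdef
  set Y : Ω → ℝ := fun ω => (l₂ - (Ns ω / P₀) * (l₂ - l₁)) / W ω with hYdef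
  set g : Ω → ℝ := fun ω => 1 / W ω with hgdef
  have hl₂ : 0 ≤ l₂ := hl₁.trans hl
  have hd : 0 ≤ l₂ - l₁ := sub_nonneg.mpr hl
  -- measurability
  have hXm : Measurable X := ((measurable_const.sub
    ((hNmeas.div_const P₀).mul measurable_const)).div hWmeas)
  have hYm : Measurable Y := ((measurable_const.sub
    ((hNsmeas.div_const P₀).mul measurable_const)).div hWmeas)
  have hgm : Measurable g := measurable_const.div hWmeas
  -- pointwise a.e. facts
  have hbase : ∀ᵐ ω ∂P, wmin ≤ W ω ∧ N ω ∈ Set.Icc 0 P₀ ∧ Ns ω ∈ Set.Icc 0 P₀ ∧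
      |N ω - Ns ω| ≤ δ / P₀ := by
    filter_upwards [hW, hN, hNs, hdiff] with ω h1 h2 h3 h4
    exact ⟨h1, h2, h3, h4⟩
  have hgbd : ∀ᵐ ω ∂P, 0 ≤ g ω ∧ g ω ≤ 1 / wmin := by
    filter_upwards [hW] with ω h1
    have hWpos : 0 < W ω := lt_of_lt_of_le hwmin h1
    exact ⟨div_nonneg zero_le_one hWpos.le, div_le_div₀ zero_le_one le_rfl hwmin h1⟩
  have hXbd : ∀ᵐ ω ∂P, 0 ≤ X ω ∧ X ω ≤ l₂ * g ω ∧ X ω ≤ l₂ / wmin := by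
    filter_upwards [hbase] with ω ⟨h1, ⟨h2a, h2b⟩, _, _⟩
    have hWpos : 0 < W ω := lt_of_lt_of_le hwmin h1
    have ht0 : 0 ≤ N ω / P₀ := div_nonneg h2a hP₀0.le
    have ht1 : N ω / P₀ ≤ 1 := (div_le_one hP₀0).mpr h2b
    have hnum0 : 0 ≤ l₂ - N ω / P₀ * (l₂ - l₁) := by nlinarith
    have hnum1 : l₂ - N ω / P₀ * (l₂ - l₁) ≤ l₂ := by nlinarith
    refine ⟨div_nonneg hnum0 hWpos.le, ?_, div_le_div₀ hl₂ hnum1 hwmin h1⟩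
    rw [hXdef, hgdef]
    simp only
    rw [mul_one_div]
    exact div_le_div₀ hl₂ hnum1 hWpos le_rfl
  have hYbd : ∀ᵐ ω ∂P, 0 ≤ Y ω ∧ Y ω ≤ l₂ * g ω ∧ Y ω ≤ l₂ / wmin := by
    filter_upwards [hbase] with ω ⟨h1, _, ⟨h2a, h2b⟩, _⟩
    have hWpos : 0 < W ω := lt_of_lt_of_le hwmin h1
    have ht0 : 0 ≤ Ns ω / P₀ := div_nonneg h2a hP₀0.le
    have ht1 : Ns ω / P₀ ≤ 1 := (div_le_one hP₀0).mpr h2b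
    have hnum0 : 0 ≤ l₂ - Ns ω / P₀ * (l₂ - l₁) := by nlinarith
    have hnum1 : l₂ - Ns ω / P₀ * (l₂ - l₁) ≤ l₂ := by nlinarith
    refine ⟨div_nonneg hnum0 hWpos.le, ?_, div_le_div₀ hl₂ hnum1 hwmin h1⟩
    rw [hYdef, hgdef]
    simp only
    rw [mul_one_div]
    exact div_le_div₀ hl₂ hnum1 hWpos le_rfl
  -- Memℒp 2
  have hX2 : MemLp X 2 P := by
    refine MemLp.of_bound hXm.aestronglyMeasurable (l₂ / wmin) ?_
    filter_upwards [hXbd] with ω ⟨h0, _, h1⟩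
    rw [Real.norm_eq_abs, abs_of_nonneg h0]; exact h1
  have hY2 : MemLp Y 2 P := by
    refine MemLp.of_bound hYm.aestronglyMeasurable (l₂ / wmin) ?_
    filter_upwards [hYbd] with ω ⟨h0, _, h1⟩
    rw [Real.norm_eq_abs, abs_of_nonneg h0]; exact h1
  -- integrability of bounded measurable functions
  have int_of_bd : ∀ (f : Ω → ℝ) (C : ℝ), Measurable f → (∀ᵐ ω ∂P, ‖f ω‖ ≤ C) →
      Integrable f P := fun f C hm hb =>
    memLp_one_iff_integrable.mp (MemLp.of_bound hm.aestronglyMeasurable C hb)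
  have hgint : Integrable g P := by
    refine int_of_bd g (1 / wmin) hgm ?_
    filter_upwards [hgbd] with ω ⟨h0, h1⟩
    rw [Real.norm_eq_abs, abs_of_nonneg h0]; exact h1
  have hg2int : Integrable (fun ω => g ω ^ 2) P := by
    refine int_of_bd _ ((1 / wmin) ^ 2) (hgm.pow_const 2) ?_
    filter_upwards [hgbd] with ω ⟨h0, h1⟩
    rw [Real.norm_eq_abs, abs_of_nonneg (by positivity)]
    exact pow_le_pow_left₀ h0 h1 2
  have hXint : Integrable X P := hX2.integrable one_le_two
  have hYint : Integrable Y P := hY2.integrable one_le_two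
  have hX2int : Integrable (fun ω => X ω ^ 2) P := by
    refine int_of_bd _ ((l₂ / wmin) ^ 2) (hXm.pow_const 2) ?_
    filter_upwards [hXbd] with ω ⟨h0, _, h1⟩
    rw [Real.norm_eq_abs, abs_of_nonneg (by positivity)]
    exact pow_le_pow_left₀ h0 h1 2
  have hY2int : Integrable (fun ω => Y ω ^ 2) P := by
    refine int_of_bd _ ((l₂ / wmin) ^ 2) (hYm.pow_const 2) ?_
    filter_upwards [hYbd] with ω ⟨h0, _, h1⟩
    rw [Real.norm_eq_abs, abs_of_nonneg (by positivity)]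
    exact pow_le_pow_left₀ h0 h1 2
  -- constant c
  set c : ℝ := (l₂ - l₁) * δ / P₀ ^ 2 with hcdef
  have hc0 : 0 ≤ c := by positivity
  -- key pointwise bounds
  have hXY : ∀ᵐ ω ∂P, |X ω - Y ω| ≤ c * g ω := by
    filter_upwards [hbase, hgbd] with ω ⟨h1, _, _, h4⟩ ⟨hg0, _⟩
    have hWpos : 0 < W ω := lt_of_lt_of_le hwmin h1
    have heq : X ω - Y ω = ((Ns ω - N ω) * (l₂ - l₁) / P₀) * g ω := by
      simp only [hXdef, hYdef, hgdef]
      field_simp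
      ring
    have hK : |(Ns ω - N ω) * (l₂ - l₁) / P₀| ≤ c := by
      rw [abs_div, abs_mul, abs_of_nonneg hd, abs_of_pos hP₀0]
      have h5 : |Ns ω - N ω| ≤ δ / P₀ := by rwa [abs_sub_comm]
      calc |Ns ω - N ω| * (l₂ - l₁) / P₀ ≤ δ / P₀ * (l₂ - l₁) / P₀ := by
            gcongr
        _ = c := by rw [hcdef]; field_simp
    calc |X ω - Y ω| = |(Ns ω - N ω) * (l₂ - l₁) / P₀| * |g ω| := by
          rw [heq, abs_mul]
      _ ≤ c * g ω := by
          rw [abs_of_nonneg hg0]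
          exact mul_le_mul_of_nonneg_right hK hg0
  have hXYsq : ∀ᵐ ω ∂P, |X ω ^ 2 - Y ω ^ 2| ≤ (2 * l₂ * c) * g ω ^ 2 := by
    filter_upwards [hXY, hXbd, hYbd, hgbd] with ω h ⟨hX0, hXg, _⟩ ⟨hY0, hYg, _⟩ ⟨hg0, _⟩
    have hsum : |X ω + Y ω| ≤ 2 * l₂ * g ω := by
      rw [abs_of_nonneg (show (0:ℝ) ≤ X ω + Y ω by linarith)]
      linarith
    calc |X ω ^ 2 - Y ω ^ 2| = |X ω - Y ω| * |X ω + Y ω| := by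
          rw [← abs_mul]; ring_nf
      _ ≤ (c * g ω) * (2 * l₂ * g ω) := by
          exact mul_le_mul h hsum (abs_nonneg _) (by positivity)
      _ = (2 * l₂ * c) * g ω ^ 2 := by ring
  have hsumbd : ∀ᵐ ω ∂P, ‖X ω + Y ω‖ ≤ 2 * l₂ / wmin := by
    filter_upwards [hXbd, hYbd] with ω ⟨hX0, _, hX1⟩ ⟨hY0, _, hY1⟩
    rw [Real.norm_eq_abs, abs_of_nonneg (show (0:ℝ) ≤ X ω + Y ω by linarith)]
    have : 2 * l₂ / wmin = l₂ / wmin + l₂ / wmin := by ring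
    rw [this]
    linarith
  -- integral bounds
  set I1 : ℝ := ∫ ω, g ω ∂P with hI1def
  set I2 : ℝ := ∫ ω, g ω ^ 2 ∂P with hI2def
  have hI1 : 0 ≤ I1 := integral_nonneg_of_ae (by filter_upwards [hgbd] with ω h; exact h.1)
  have hI2 : 0 ≤ I2 := integral_nonneg fun ω => sq_nonneg _
  have hA : |∫ ω, (X ω - Y ω) ∂P| ≤ c * I1 := by
    rw [← Real.norm_eq_abs]
    calc ‖∫ ω, (X ω - Y ω) ∂P‖ ≤ ∫ ω, c * g ω ∂P := by
          refine norm_integral_le_of_norm_le (hgint.const_mul c) ?_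
          filter_upwards [hXY] with ω h
          rwa [Real.norm_eq_abs]
      _ = c * I1 := by rw [integral_const_mul]
  have hB : |∫ ω, (X ω ^ 2 - Y ω ^ 2) ∂P| ≤ (2 * l₂ * c) * I2 := by
    rw [← Real.norm_eq_abs]
    calc ‖∫ ω, (X ω ^ 2 - Y ω ^ 2) ∂P‖ ≤ ∫ ω, (2 * l₂ * c) * g ω ^ 2 ∂P := by
          refine norm_integral_le_of_norm_le (hg2int.const_mul _) ?_
          filter_upwards [hXYsq] with ω h
          rwa [Real.norm_eq_abs]
      _ = (2 * l₂ * c) * I2 := by rw [integral_const_mul]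
  have hS : |∫ ω, (X ω + Y ω) ∂P| ≤ 2 * l₂ / wmin := by
    rw [← Real.norm_eq_abs]
    calc ‖∫ ω, (X ω + Y ω) ∂P‖ ≤ ∫ _ω, (2 * l₂ / wmin) ∂P :=
          norm_integral_le_of_norm_le (integrable_const _) hsumbd
      _ = 2 * l₂ / wmin := by simp
  -- variance identity
  have hVar : variance X P - variance Y P
      = (∫ ω, (X ω ^ 2 - Y ω ^ 2) ∂P)
        - (∫ ω, (X ω - Y ω) ∂P) * (∫ ω, (X ω + Y ω) ∂P) := by
    rw [variance_eq_sub hX2, variance_eq_sub hY2, integral_sub hX2int hY2int,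
      integral_sub hXint hYint, integral_add hXint hYint]
    simp only [Pi.pow_apply]
    ring
  -- main bound
  have main : |variance X P - variance Y P| ≤ (D₁ + D₂) * δ := by
    have step1 : |variance X P - variance Y P|
        ≤ (2 * l₂ * c) * I2 + (c * I1) * (2 * l₂ / wmin) := by
      rw [hVar]
      calc |(∫ ω, (X ω ^ 2 - Y ω ^ 2) ∂P)
            - (∫ ω, (X ω - Y ω) ∂P) * (∫ ω, (X ω + Y ω) ∂P)|
          ≤ |∫ ω, (X ω ^ 2 - Y ω ^ 2) ∂P|
            + |∫ ω, (X ω - Y ω) ∂P| * |∫ ω, (X ω + Y ω) ∂P| := by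
            refine (abs_sub _ _).trans ?_
            rw [abs_mul]
        _ ≤ (2 * l₂ * c) * I2 + (c * I1) * (2 * l₂ / wmin) :=
            add_le_add hB (mul_le_mul hA hS (abs_nonneg _) (mul_nonneg hc0 hI1))
    refine step1.trans ?_
    have t2 : (2 * l₂ * c) * I2 ≤ D₂ * δ := by
      rw [hD₂, hcdef]
      calc 2 * l₂ * ((l₂ - l₁) * δ / P₀ ^ 2) * I2
          = 2 * l₂ * (l₂ - l₁) / P₀ ^ 2 * (I2 * δ) := by ring
        _ ≤ 2 * (2 * l₂ - l₁) * (l₂ - l₁) / P₀ ^ 2 * (I2 * δ) := by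
            have h0 : 0 ≤ I2 * δ := mul_nonneg hI2 hδ.le
            have hll : l₂ ≤ 2 * l₂ - l₁ := by linarith
            gcongr
        _ = 2 * (l₂ - l₁) * (2 * l₂ - l₁) * I2 / P₀ ^ 2 * δ := by ring
    have t1 : (c * I1) * (2 * l₂ / wmin) ≤ D₁ * δ := by
      rw [hD₁, hcdef]
      have e1 : ((l₂ - l₁) * δ / P₀ ^ 2 * I1) * (2 * l₂ / wmin)
          = (2 * l₂ * (l₂ - l₁) * δ * I1) / (P₀ ^ 2 * wmin) := by ring
      have e2 : 2 * l₂ * (l₂ - l₁) * I1 / (P₀ ^ 3 * wmin) * δ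
          = (2 * l₂ * (l₂ - l₁) * δ * I1) / (P₀ ^ 3 * wmin) := by ring
      have hA0 : 0 ≤ 2 * l₂ * (l₂ - l₁) * δ * I1 := by positivity
      have hm : P₀ ^ 3 * wmin ≤ P₀ ^ 2 * wmin := by
        have h := mul_nonneg (mul_nonneg (sq_nonneg P₀) hwmin.le)
          (sub_nonneg.mpr hP₀1)
        nlinarith [h]
      rw [e1, e2, div_le_div_iff₀ (by positivity) (by positivity)]
      exact mul_le_mul_of_nonneg_left hm hA0
    linarith
  refine ⟨main, ?_⟩
  calc |Real.sqrt (variance X P) - Real.sqrt (variance Y P)|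
      ≤ Real.sqrt |variance X P - variance Y P| :=
        sqrt_abs_sub_sqrt_le (variance_nonneg X P) (variance_nonneg Y P)
    _ ≤ Real.sqrt ((D₁ + D₂) * δ) := Real.sqrt_le_sqrt main
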